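/- arXiv:2408.04850 — 2 statements merged into one kernel-verified Lean document; each statement's English description precedes it below -/
import Mathlib

section
/- Let α be a totally real algebraic integer all of whose conjugates (over ℚ) lie in the open interval (-√2, √2). Then α ∈ {-1, 0, 1}. -/
open Polynomial

lemma prod_aux (s : Multiset ℝ) (h : ∀ x ∈ s, 0 ≤ x ∧ x ≤ 1) : 0 ≤ s.prod ∧ s.prod ≤ 1 := by
  induction s using Multiset.induction with
  | empty => simp
  | cons a s ih =>
    obtain ⟨ha0, ha1⟩ := h a (Multiset.mem_cons_self a s)
    obtain ⟨h0, h1⟩ := ih (fun x hx => h x (Multiset.mem_cons_of_mem hx))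
    rw [Multiset.prod_cons]
    exact ⟨mul_nonneg ha0 h0, by nlinarith⟩

/-- A totally real algebraic integer all of whose conjugates over ℚ lie in
the open interval `(-√2, √2)` must be `-1`, `0`, or `1`. -/
theorem totally_real_small_conjugates (α : ℂ) (hint : IsIntegral ℤ α)
    (hconj : ∀ z ∈ (minpoly ℚ α).aroots ℂ,
      ∃ x : ℝ, z = (x : ℂ) ∧ -Real.sqrt 2 < x ∧ x < Real.sqrt 2) :
    α = -1 ∨ α = 0 ∨ α = 1 := by
  have hQint : IsIntegral ℚ α := hint.tower_top
  set q : ℤ[X] := minpoly ℤ α with hqdef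
  have hq : minpoly ℚ α = q.map (algebraMap ℤ ℚ) :=
    minpoly.isIntegrallyClosed_eq_field_fractions' ℚ hint
  set p : ℂ[X] := (minpoly ℚ α).map (algebraMap ℚ ℂ) with hpdef
  have hp : p = q.map (Int.castRingHom ℂ) := by
    rw [hpdef, hq, Polynomial.map_map]
    congr 1
  have hmono : p.Monic := (minpoly.monic hQint).map _
  set R : Multiset ℂ := p.roots with hRdef
  have hprod : p = (R.map fun a => X - C a).prod :=
    (IsAlgClosed.splits p).eq_prod_roots_of_monic hmono
  have heval : ∀ t : ℂ, p.eval t = (R.map fun z => t - z).prod := by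
    intro t
    conv_lhs => rw [hprod]
    rw [eval_multiset_prod, Multiset.map_map]
    simp
  have habs : ∀ t : ℂ, ‖p.eval t‖ = (R.map fun z => ‖t - z‖).prod := by
    intro t
    rw [heval]
    rw [← normHom_apply, map_multiset_prod, Multiset.map_map]
    simp [Function.comp]
  have hmem : α ∈ R := by
    rw [hRdef, mem_roots hmono.ne_zero]
    show p.eval α = 0
    rw [hpdef, eval_map, ← aeval_def]
    exact minpoly.aeval ℚ α
  have hreal : ∀ z ∈ R, ∃ x : ℝ, z = ↑x ∧ -Real.sqrt 2 < x ∧ x < Real.sqrt 2 := hconj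
  have h2' : Real.sqrt 2 * Real.sqrt 2 = 2 := Real.mul_self_sqrt (by norm_num)
  have h2 : Real.sqrt 2 * Real.sqrt 2 = ((2:ℤ):ℝ) := by rw [h2']; norm_num
  set f : (ℤ√2) →+* ℝ := Zsqrtd.lift ⟨Real.sqrt 2, h2⟩ with hfdef
  have hfs : f Zsqrtd.sqrtd = Real.sqrt 2 := by
    simp [hfdef, Zsqrtd.lift, Zsqrtd.re_sqrtd, Zsqrtd.im_sqrtd]
  set w : ℤ√2 := q.eval₂ (Int.castRingHom (ℤ√2)) Zsqrtd.sqrtd with hwdef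
  have hb : f w = q.eval₂ (Int.castRingHom ℝ) (Real.sqrt 2) := by
    rw [hwdef, hom_eval₂, hfs]
    congr 1
    exact Subsingleton.elim _ _
  have hstar : star w = q.eval₂ (Int.castRingHom (ℤ√2)) (-Zsqrtd.sqrtd) := by
    rw [hwdef]
    rw [show (star (q.eval₂ (Int.castRingHom (ℤ√2)) Zsqrtd.sqrtd) : ℤ√2)
        = (starRingEnd (ℤ√2)) (q.eval₂ (Int.castRingHom (ℤ√2)) Zsqrtd.sqrtd) from rfl]
    rw [hom_eval₂]
    congr 1
  have hc : f (star w) = q.eval₂ (Int.castRingHom ℝ) (-Real.sqrt 2) := by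
    rw [hstar, hom_eval₂, map_neg, hfs]
    congr 1
    exact Subsingleton.elim _ _
  have hbc : q.eval₂ (Int.castRingHom ℝ) (Real.sqrt 2) * q.eval₂ (Int.castRingHom ℝ) (-Real.sqrt 2)
      = ((w.norm : ℤ) : ℝ) := by
    rw [← hb, ← hc, ← map_mul, ← Zsqrtd.norm_eq_mul_conj, map_intCast]
  have hev : ∀ r : ℝ, p.eval ((r : ℝ) : ℂ) = ((q.eval₂ (Int.castRingHom ℝ) r : ℝ) : ℂ) := by
    intro r
    rw [hp, eval_map]
    rw [show (Int.castRingHom ℂ) = Complex.ofRealHom.comp (Int.castRingHom ℝ) from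
      Subsingleton.elim _ _]
    exact (hom_eval₂ _ _ _ _).symm
  have ha0 : q.eval₂ (Int.castRingHom ℝ) ((0:ℤ):ℝ) = ((q.eval 0 : ℤ) : ℝ) :=
    eval₂_at_apply _ _
  set N : ℤ := (q.eval 0)^2 * w.norm with hNdef
  set g : ℂ → ℝ := fun z =>
      ‖((0:ℝ):ℂ) - z‖ * ‖((0:ℝ):ℂ) - z‖ *
      (‖((Real.sqrt 2 : ℝ):ℂ) - z‖ * ‖((-Real.sqrt 2 : ℝ):ℂ) - z‖)
    with hgdef
  have hNprod : |(N : ℝ)| = (R.map g).prod := by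
    have e0 := habs (((0:ℝ):ℂ))
    have e1 := habs (((Real.sqrt 2 : ℝ):ℂ))
    have e2 := habs (((-Real.sqrt 2 : ℝ):ℂ))
    rw [hev, Complex.norm_real, Real.norm_eq_abs] at e0 e1 e2
    have hsplitprod : (R.map g).prod =
        ((R.map fun z => ‖((0:ℝ):ℂ) - z‖).prod *
         (R.map fun z => ‖((0:ℝ):ℂ) - z‖).prod) *
        ((R.map fun z => ‖((Real.sqrt 2 : ℝ):ℂ) - z‖).prod *
         (R.map fun z => ‖((-Real.sqrt 2 : ℝ):ℂ) - z‖).prod) := by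
      rw [← Multiset.prod_map_mul, ← Multiset.prod_map_mul, ← Multiset.prod_map_mul]
    rw [hsplitprod, ← e0, ← e1, ← e2]
    have h0' : q.eval₂ (Int.castRingHom ℝ) (0:ℝ) = ((q.eval 0 : ℤ) : ℝ) := by
      push_cast at ha0
      exact ha0
    rw [h0', ← abs_mul, ← abs_mul, ← abs_mul, hbc, hNdef]
    push_cast
    congr 1
    ring
  have h0' : q.eval₂ (Int.castRingHom ℝ) (0:ℝ) = ((q.eval 0 : ℤ) : ℝ) := by
    push_cast at ha0
    exact ha0
  have hgval : ∀ x : ℝ, -Real.sqrt 2 < x → x < Real.sqrt 2 →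
      g ((x : ℝ) : ℂ) = x^2 * (2 - x^2) := by
    intro x hx1 hx2
    simp only [hgdef, ← Complex.ofReal_sub, Complex.norm_real, Real.norm_eq_abs]
    rw [abs_of_nonneg (by linarith : (0:ℝ) ≤ Real.sqrt 2 - x),
        abs_of_nonpos (by linarith : -Real.sqrt 2 - x ≤ 0)]
    rw [show |(0:ℝ) - x| = |x| by rw [zero_sub, abs_neg]]
    rw [abs_mul_abs_self]
    linear_combination (x * x) * h2'
  have hsqlt : ∀ x : ℝ, -Real.sqrt 2 < x → x < Real.sqrt 2 → x^2 < 2 := by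
    intro x hx1 hx2
    nlinarith [mul_pos (by linarith : (0:ℝ) < Real.sqrt 2 - x)
      (by linarith : (0:ℝ) < Real.sqrt 2 + x), h2']
  have hbound : ∀ z ∈ R, 0 ≤ g z ∧ g z ≤ 1 := by
    intro z hz
    obtain ⟨x, rfl, hx1, hx2⟩ := hreal z hz
    rw [hgval x hx1 hx2]
    have hxx := hsqlt x hx1 hx2
    constructor
    · nlinarith [sq_nonneg x]
    · nlinarith [sq_nonneg (x^2 - 1)]
  obtain ⟨x, hax, hax1, hax2⟩ := hreal α hmem
  by_cases hxone : x = 1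
  · right; right; rw [hax, hxone]; norm_num
  by_cases hxmone : x = -1
  · left; rw [hax, hxmone]; norm_num
  by_cases hxzero : x = 0
  · right; left; rw [hax, hxzero]; norm_num
  exfalso
  have hga : g α = x^2 * (2 - x^2) := by rw [hax]; exact hgval x hax1 hax2
  have hga1 : g α < 1 := by
    rw [hga]
    have hne : x^2 - 1 ≠ 0 := by
      intro h
      rcases mul_eq_zero.1 (show (x - 1) * (x + 1) = 0 by linear_combination h) with h' | h'
      · exact hxone (by linarith)
      · exact hxmone (by linarith)
    have hpos : 0 < (x^2 - 1)^2 := by positivity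
    nlinarith
  have hga0 : 0 ≤ g α := (hbound α hmem).1
  have hRe : α ::ₘ (R.erase α) = R := Multiset.cons_erase hmem
  have hNlt : |(N:ℝ)| < 1 := by
    rw [hNprod, ← hRe, Multiset.map_cons, Multiset.prod_cons]
    obtain ⟨hp0, hp1⟩ := prod_aux ((R.erase α).map g) (by
      intro y hy
      obtain ⟨z, hz, rfl⟩ := Multiset.mem_map.1 hy
      exact hbound z (Multiset.mem_of_mem_erase hz))
    nlinarith
  have hN0 : N = 0 := by
    have h1 : ((|N| : ℤ) : ℝ) < 1 := by rwa [Int.cast_abs]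
    have h2'' : |N| < 1 := by exact_mod_cast h1
    exact Int.abs_lt_one_iff.mp h2''
  have hprod0 : (R.map g).prod = 0 := by
    have h := hNprod
    rw [hN0] at h
    simpa using h.symm
  have h0mem : (0:ℝ) ∈ R.map g := Multiset.prod_eq_zero_iff.1 hprod0
  obtain ⟨z, hzR, hgz⟩ := Multiset.mem_map.1 h0mem
  obtain ⟨x', rfl, hx1', hx2'⟩ := hreal z hzR
  rw [hgval x' hx1' hx2'] at hgz
  have hx'0 : x' = 0 := by
    have := hsqlt x' hx1' hx2'
    rcases mul_eq_zero.1 hgz with h' | h'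
    · exact pow_eq_zero_iff (n := 2) (by norm_num) |>.1 h'
    · nlinarith
  rw [hx'0] at hzR
  have hpz : p.eval ((0:ℝ):ℂ) = 0 := isRoot_of_mem_roots hzR
  rw [hev 0] at hpz
  have hq0 : q.eval 0 = 0 := by
    have : ((q.eval 0 : ℤ) : ℝ) = 0 := by
      rw [← h0']
      exact_mod_cast hpz
    exact_mod_cast this
  have hα0 : α = 0 := by
    apply (minpoly.coeff_zero_eq_zero hQint).1
    rw [hq, coeff_map, coeff_zero_eq_eval_zero, hq0]
    simp
  rw [hα0] at hax
  exact hxzero (by exact_mod_cast hax.symm)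
end

section
/- For each point (x, C) on the affine curve {δ̃₃(x,C) = 0} over an algebraically closed field of characteristic 0, the fiber of the map t ↦ (t³ - t² + 7t + 1, -t² - 7) has exactly one element if (x, C) ≠ (8, 0), and exactly two elements if (x, C) = (8, 0). -/
/-- For each point `(x, C)` of the curve `δ̃₃(x, C) = 0` over an algebraically closed
field of characteristic zero, the fiber of `t ↦ (t³ - t² + 7t + 1, -t² - 7)` has
exactly one element if `(x, C) ≠ (8, 0)` and exactly two elements if `(x, C) = (8, 0)`. -/
theorem fibers_of_X3_parametrization (K : Type*) [Field K] [IsAlgClosed K] [CharZero K]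
    (x C : K) (h : x ^ 2 - (2 * C + 16) * x + (C ^ 3 + 8 * C ^ 2 + 16 * C + 64) = 0) :
    ((x, C) ≠ (8, 0) →
      {t : K | (t ^ 3 - t ^ 2 + 7 * t + 1, -t ^ 2 - 7) = (x, C)}.ncard = 1) ∧
    ((x, C) = (8, 0) →
      {t : K | (t ^ 3 - t ^ 2 + 7 * t + 1, -t ^ 2 - 7) = (x, C)}.ncard = 2) := by
  constructor
  · intro hne
    have hC : C ≠ 0 := by
      intro hC0
      apply hne
      subst hC0
      have hx8 : (x - 8) ^ 2 = 0 := by linear_combination h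
      have hx : x = 8 := sub_eq_zero.mp (pow_eq_zero_iff (n := 2) (by norm_num) |>.mp hx8)
      simp [hx]
    set u : K := (C + 8 - x) / C with hu
    have htC : u * C = C + 8 - x := by rw [hu, div_mul_cancel₀ _ hC]
    have hu2 : -u ^ 2 - 7 = C := by
      have h2 : (u * C) ^ 2 = (C + 8 - x) ^ 2 := by rw [htC]
      have h3 : (u ^ 2 + 7 + C) * C ^ 2 = 0 := by linear_combination h2 + h
      rcases mul_eq_zero.mp h3 with h4 | h4
      · linear_combination -h4
      · exact absurd (pow_eq_zero_iff (n := 2) (by norm_num) |>.mp h4) hC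
    have hset : {t : K | (t ^ 3 - t ^ 2 + 7 * t + 1, -t ^ 2 - 7) = (x, C)} = {u} := by
      ext t
      simp only [Set.mem_setOf_eq, Set.mem_singleton_iff, Prod.mk.injEq]
      constructor
      · rintro ⟨hx, ht2⟩
        have : t * C = C + 8 - x := by linear_combination (1 - t) * ht2 - hx
        rw [hu, eq_div_iff hC]
        linear_combination this
      · rintro rfl
        refine ⟨by linear_combination (1 - u) * hu2 - htC, by linear_combination hu2⟩
    rw [hset, Set.ncard_singleton]
  · intro heq
    obtain ⟨hx8, hC0⟩ := Prod.mk.injEq x C 8 0 ▸ heq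
    obtain ⟨s, hs⟩ := IsAlgClosed.exists_pow_nat_eq (-7 : K) (n := 2) (by norm_num)
    have hs0 : s ≠ 0 := by
      intro h0
      rw [h0] at hs
      norm_num at hs
    have hsne : s ≠ -s := by
      intro hss
      have h2 : (2 : K) * s = 0 := by linear_combination hss
      exact hs0 (by simpa [two_ne_zero] using mul_eq_zero.mp h2)
    have hset : {t : K | (t ^ 3 - t ^ 2 + 7 * t + 1, -t ^ 2 - 7) = (x, C)} = {s, -s} := by
      ext t
      simp only [Set.mem_setOf_eq, Set.mem_insert_iff, Set.mem_singleton_iff, Prod.mk.injEq,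
        hx8, hC0]
      constructor
      · rintro ⟨hx, ht2⟩
        have : (t - s) * (t + s) = 0 := by linear_combination -ht2 - hs
        rcases mul_eq_zero.mp this with h1 | h1
        · exact Or.inl (sub_eq_zero.mp h1)
        · exact Or.inr (add_eq_zero_iff_eq_neg.mp h1)
      · rintro (h1 | h1) <;> rw [h1]
        · exact ⟨by linear_combination (s - 1) * hs, by linear_combination -hs⟩
        · exact ⟨by linear_combination (-s - 1) * hs, by linear_combination -hs⟩
    rw [hset, Set.ncard_pair hsne]
end
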